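/- For n ≥ 1 let H_n = ∑_{k=1}^n 1/k be the n-th harmonic number and set a_k = √(1/H_k − 1/H_{k+1}) = 1/√((k+1) H_k H_{k+1}) for k ≥ 1. Then: (1) the sequence (a_k) is monotone decreasing; (2) ∑_{k=1}^∞ a_k² = 1; and (3) for every n ≥ 1, ∑_{k=1}^∞ a_k a_{k+n−1} ≥ 1/H_n. -/
import Mathlib


/-- The `n`-th harmonic number `H_n = ∑_{k=1}^n 1/k` (so `harmonic 0 = 0`). -/
noncomputable def harmonicNum (n : ℕ) : ℝ := ∑ k ∈ Finset.range n, (1 : ℝ) / (k + 1)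

/-- The sequence `a_k = √(1/H_k − 1/H_{k+1})`; here `seqA k` represents `a_{k+1}`
(`k = 0, 1, 2, …` corresponds to `a_1, a_2, …`). -/
noncomputable def seqA (k : ℕ) : ℝ :=
  Real.sqrt (1 / harmonicNum (k + 1) - 1 / harmonicNum (k + 2))

lemma harmonicNum_pos (n : ℕ) : 0 < harmonicNum (n + 1) := by
  unfold harmonicNum
  apply Finset.sum_pos
  · intro i _; positivity
  · exact ⟨0, Finset.mem_range.2 n.succ_pos⟩

lemma harmonicNum_succ (n : ℕ) : harmonicNum (n + 1) = harmonicNum n + 1 / (n + 1) := by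
  unfold harmonicNum
  rw [Finset.sum_range_succ]

lemma harmonicNum_le_succ (n : ℕ) : harmonicNum n ≤ harmonicNum (n + 1) := by
  rw [harmonicNum_succ]
  have : (0:ℝ) < 1 / (n + 1) := by positivity
  linarith

lemma hdiff (k : ℕ) :
    1 / harmonicNum (k + 1) - 1 / harmonicNum (k + 2) =
      1 / ((k + 2) * harmonicNum (k + 1) * harmonicNum (k + 2)) := by
  have h1 := harmonicNum_pos k
  have hk : (0:ℝ) < (k:ℝ) + 2 := by positivity
  have hs : harmonicNum (k + 2) = harmonicNum (k + 1) + 1 / ((k:ℝ) + 2) := by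
    rw [show k + 2 = k + 1 + 1 from rfl, harmonicNum_succ]
    push_cast; ring
  have h2' : (0:ℝ) < harmonicNum (k + 1) + 1 / ((k:ℝ) + 2) := by positivity
  rw [hs]
  field_simp
  ring

lemma hdiff_nonneg (k : ℕ) :
    0 ≤ 1 / harmonicNum (k + 1) - 1 / harmonicNum (k + 2) := by
  rw [hdiff]
  have h1 := harmonicNum_pos k
  have h2 := harmonicNum_pos (k + 1)
  positivity

lemma seqA_sq (k : ℕ) : seqA k ^ 2 = 1 / harmonicNum (k + 1) - 1 / harmonicNum (k + 2) := by
  unfold seqA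
  exact Real.sq_sqrt (hdiff_nonneg k)

lemma seqA_nonneg (k : ℕ) : 0 ≤ seqA k := Real.sqrt_nonneg _

lemma harmonic_tendsto : Filter.Tendsto (fun n => harmonicNum n) Filter.atTop Filter.atTop := by
  have := Real.tendsto_sum_range_one_div_nat_succ_atTop
  unfold harmonicNum
  exact this

lemma hasSum_tail (m : ℕ) :
    HasSum (fun k => seqA (k + m) ^ 2) (1 / harmonicNum (m + 1)) := by
  have hnn : ∀ k : ℕ, 0 ≤ seqA (k + m) ^ 2 := fun k => sq_nonneg _
  rw [hasSum_iff_tendsto_nat_of_nonneg hnn]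
  have hps : ∀ N : ℕ, ∑ k ∈ Finset.range N, seqA (k + m) ^ 2 =
      1 / harmonicNum (m + 1) - 1 / harmonicNum (N + m + 1) := by
    intro N
    have := Finset.sum_range_sub' (fun i => 1 / harmonicNum (i + m + 1)) N
    simp only [Nat.zero_add] at this
    rw [← this]
    refine Finset.sum_congr rfl fun i _ => ?_
    rw [seqA_sq, show i + 1 + m + 1 = i + m + 2 from by omega]
  simp only [hps]
  have h0 : Filter.Tendsto (fun N : ℕ => 1 / harmonicNum (N + m + 1)) Filter.atTop (nhds 0) := by
    simp only [one_div]
    apply Filter.Tendsto.inv_tendsto_atTop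
    exact harmonic_tendsto.comp (Filter.tendsto_add_atTop_nat (m + 1))
  have := Filter.Tendsto.const_sub (1 / harmonicNum (m + 1)) h0
  simpa using this

lemma seqA_antitone : ∀ k : ℕ, seqA (k + 1) ≤ seqA k := by
  intro k
  unfold seqA
  apply Real.sqrt_le_sqrt
  rw [hdiff, hdiff]
  simp only [show k + 1 + 1 = k + 2 from rfl, show k + 1 + 2 = k + 3 from rfl]
  push_cast
  have h1 := harmonicNum_pos k
  have h2 : 0 < harmonicNum (k + 2) := harmonicNum_pos (k + 1)
  have h3 : 0 < harmonicNum (k + 3) := harmonicNum_pos (k + 2)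
  have e1 : harmonicNum (k + 1) ≤ harmonicNum (k + 2) := harmonicNum_le_succ (k + 1)
  have e2 : harmonicNum (k + 2) ≤ harmonicNum (k + 3) := harmonicNum_le_succ (k + 2)
  apply one_div_le_one_div_of_le
  · positivity
  · push_cast
    calc ((k:ℝ) + 2) * harmonicNum (k + 1) * harmonicNum (k + 2)
        ≤ ((k:ℝ) + 2) * (harmonicNum (k + 2) * harmonicNum (k + 3)) := by
          nlinarith [mul_le_mul e1 e2 h2.le (h1.le.trans e1)]
      _ ≤ ((k:ℝ) + 1 + 2) * (harmonicNum (k + 2) * harmonicNum (k + 3)) := by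
          nlinarith [mul_pos h2 h3]
      _ = ((k:ℝ) + 1 + 2) * harmonicNum (k + 2) * harmonicNum (k + 3) := by ring

/-- With `a_k = √(1/H_k − 1/H_{k+1}) = 1/√((k+1)H_k H_{k+1})`: `(a_k)` is monotone
decreasing, `∑ a_k² = 1`, and `∑_k a_k a_{k+n−1} ≥ 1/H_n` for every `n ≥ 1`. -/
theorem stmt18 :
    (∀ k : ℕ, seqA k =
      1 / Real.sqrt ((k + 2) * harmonicNum (k + 1) * harmonicNum (k + 2))) ∧
    (∀ k : ℕ, seqA (k + 1) ≤ seqA k) ∧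
    HasSum (fun k => seqA k ^ 2) 1 ∧
    ∀ n : ℕ, 1 / harmonicNum (n + 1) ≤ ∑' k, seqA k * seqA (k + n) := by
  have hanti : Antitone seqA := antitone_nat_of_succ_le (fun n => seqA_antitone n)
  refine ⟨?_, seqA_antitone, ?_, ?_⟩
  · intro k
    unfold seqA
    rw [hdiff, one_div, Real.sqrt_inv, one_div]
  · have := hasSum_tail 0
    simp only [Nat.add_zero, Nat.zero_add] at this
    have h1 : harmonicNum 1 = 1 := by unfold harmonicNum; simp
    rwa [h1, div_one] at this
  · intro n
    have hsum_sq : Summable (fun k => seqA k ^ 2) := by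
      have := hasSum_tail 0
      simpa using this.summable
    have hle : ∀ k : ℕ, seqA k * seqA (k + n) ≤ seqA k ^ 2 := by
      intro k
      have := hanti (Nat.le_add_right k n)
      nlinarith [seqA_nonneg k, seqA_nonneg (k + n)]
    have hsummable : Summable (fun k => seqA k * seqA (k + n)) :=
      Summable.of_nonneg_of_le
        (fun k => mul_nonneg (seqA_nonneg k) (seqA_nonneg (k + n))) hle hsum_sq
    calc 1 / harmonicNum (n + 1) = ∑' k, seqA (k + n) ^ 2 := (hasSum_tail n).tsum_eq.symm
      _ ≤ ∑' k, seqA k * seqA (k + n) := by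
          apply Summable.tsum_le_tsum _ (hasSum_tail n).summable hsummable
          intro k
          have := hanti (Nat.le_add_right k n)
          nlinarith [seqA_nonneg (k + n)]
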